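/- Let R be an n×n real matrix whose symmetric part (R + Rᵀ)/2 is positive definite (equivalently xᵀRx > 0 for all nonzero x ∈ ℝⁿ, which implies R is invertible). Then every (complex) eigenvalue of the matrix R·R⁻ᵀ + Rᵀ·R⁻¹ is real and lies in the interval [−2, 2]. -/

import Mathlib

open Matrix

namespace EigAux

/-- Key modulus lemma: if `R w = c • Rᵀ w` for `w ≠ 0` (over ℂ, R real with pd symmetric
part), then `|c| = 1`. -/
lemma mod_one {n : ℕ} (R : Matrix (Fin n) (Fin n) ℝ)
    (hR : ∀ x : Fin n → ℝ, x ≠ 0 → 0 < x ⬝ᵥ (R *ᵥ x))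
    (c : ℂ) (w : Fin n → ℂ) (hw : w ≠ 0)
    (heq : (R.map Complex.ofReal) *ᵥ w = c • ((Rᵀ.map Complex.ofReal) *ᵥ w)) :
    ‖c‖ = 1 := by
  classical
  set a : Fin n → ℝ := fun i => (w i).re with ha
  set b : Fin n → ℝ := fun i => (w i).im with hb
  set z : ℂ := star w ⬝ᵥ ((R.map Complex.ofReal) *ᵥ w) with hz
  -- z as a double sum
  have hzsum : z = ∑ i, ∑ j, (starRingEnd ℂ) (w i) * ((R i j : ℂ) * w j) := by
    simp [hz, dotProduct, mulVec, Finset.mul_sum, Matrix.map_apply, Pi.star_apply]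
  -- real part of z
  have hre : z.re = a ⬝ᵥ (R *ᵥ a) + b ⬝ᵥ (R *ᵥ b) := by
    rw [hzsum]
    rw [Complex.re_sum]
    simp only [dotProduct, mulVec, Finset.mul_sum]
    rw [← Finset.sum_add_distrib]
    refine Finset.sum_congr rfl fun i _ => ?_
    rw [Complex.re_sum, ← Finset.sum_add_distrib]
    refine Finset.sum_congr rfl fun j _ => ?_
    simp [Complex.mul_re, Complex.conj_re, Complex.conj_im, ha, hb]
  -- nonneg quadratic form
  have hnn : ∀ x : Fin n → ℝ, 0 ≤ x ⬝ᵥ (R *ᵥ x) := by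
    intro x
    by_cases hx : x = 0
    · simp [hx]
    · exact le_of_lt (hR x hx)
  -- positivity of z.re
  have hpos : 0 < z.re := by
    rw [hre]
    have hab : a ≠ 0 ∨ b ≠ 0 := by
      by_contra h
      push_neg at h
      apply hw
      funext i
      have h1 : (w i).re = 0 := congrFun h.1 i
      have h2 : (w i).im = 0 := congrFun h.2 i
      exact Complex.ext h1 h2
    rcases hab with h | h
    · have := hR a h
      have := hnn b
      linarith
    · have := hR b h
      have := hnn a
      linarith
  have hz0 : z ≠ 0 := fun h => by simp [h] at hpos
  -- conjugate of z
  have hconj : (starRingEnd ℂ) z = star w ⬝ᵥ ((Rᵀ.map Complex.ofReal) *ᵥ w) := by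
    rw [hzsum, map_sum]
    have : star w ⬝ᵥ ((Rᵀ.map Complex.ofReal) *ᵥ w)
        = ∑ j, ∑ i, (starRingEnd ℂ) (w j) * ((R i j : ℂ) * w i) := by
      simp [dotProduct, mulVec, Finset.mul_sum, Matrix.map_apply, Matrix.transpose_apply,
        Pi.star_apply]
    rw [this, Finset.sum_comm]
    refine Finset.sum_congr rfl fun i _ => ?_
    rw [map_sum]
    refine Finset.sum_congr rfl fun j _ => ?_
    simp only [_root_.map_mul, Complex.conj_ofReal, Complex.conj_conj]
    ring
  -- z = c * conj z
  have hzc : z = c * (starRingEnd ℂ) z := by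
    rw [hconj, hz, heq, dotProduct_smul, smul_eq_mul]
  -- conclude
  have habs : ‖z‖ = ‖c‖ * ‖z‖ := by
    conv_lhs => rw [hzc]
    rw [norm_mul, Complex.norm_conj]
  have hza : ‖z‖ ≠ 0 := norm_ne_zero_iff.mpr hz0
  have : ‖c‖ * ‖z‖ = 1 * ‖z‖ := by
    rw [one_mul]; exact habs.symm
  exact mul_right_cancel₀ hza this

end EigAux

/-- If the symmetric part of `R` is positive definite (`xᵀRx > 0` for nonzero `x`), then
every complex eigenvalue of `R·R⁻ᵀ + Rᵀ·R⁻¹` is real and lies in `[-2, 2]`. -/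
theorem eigenvalues_RRinvT_in_interval
    (n : ℕ) (R : Matrix (Fin n) (Fin n) ℝ)
    (hR : ∀ x : Fin n → ℝ, x ≠ 0 → 0 < x ⬝ᵥ (R *ᵥ x)) :
    ∀ μ ∈ spectrum ℂ ((R * (Rᵀ)⁻¹ + Rᵀ * R⁻¹).map (Complex.ofReal)),
      μ.im = 0 ∧ -2 ≤ μ.re ∧ μ.re ≤ 2 := by
  classical
  intro μ hμ
  -- invertibility of R over ℝ
  have hdet : IsUnit R.det := by
    rw [isUnit_iff_ne_zero]
    intro h0
    obtain ⟨v, hv, hv0⟩ := (Matrix.exists_mulVec_eq_zero_iff).2 h0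
    have := hR v hv
    rw [hv0] at this
    simp at this
  have hdetT : IsUnit Rᵀ.det := by rwa [Matrix.det_transpose]
  -- complex versions
  set Rc : Matrix (Fin n) (Fin n) ℂ := R.map Complex.ofReal with hRc
  set Rtc : Matrix (Fin n) (Fin n) ℂ := Rᵀ.map Complex.ofReal with hRtc
  have hmapdet : ∀ A : Matrix (Fin n) (Fin n) ℝ,
      (A.map Complex.ofReal).det = Complex.ofReal A.det := by
    intro A
    exact (RingHom.map_det Complex.ofRealHom A).symm
  have hdetc : IsUnit Rc.det := by
    rw [hRc, hmapdet, isUnit_iff_ne_zero]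
    simpa using hdet.ne_zero
  have hdetTc : IsUnit Rtc.det := by
    rw [hRtc, hmapdet, isUnit_iff_ne_zero]
    simpa using hdetT.ne_zero
  -- map commutes with inverse
  have hmapinv : ∀ A : Matrix (Fin n) (Fin n) ℝ, IsUnit A.det →
      (A⁻¹).map Complex.ofReal = (A.map Complex.ofReal)⁻¹ := by
    intro A hA
    refine (Matrix.inv_eq_right_inv ?_).symm
    have : (A * A⁻¹).map Complex.ofReal = (1 : Matrix (Fin n) (Fin n) ℝ).map Complex.ofReal := by
      rw [Matrix.mul_nonsing_inv A hA]
    rw [show (A * A⁻¹).map Complex.ofReal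
        = A.map Complex.ofReal * (A⁻¹).map Complex.ofReal from
        Matrix.map_mul (f := Complex.ofRealHom)] at this
    rw [this]
    exact Matrix.map_one _ (by simp) (by simp)
  -- the matrix over ℂ
  set U : Matrix (Fin n) (Fin n) ℂ := Rc * Rtc⁻¹ with hU
  set V : Matrix (Fin n) (Fin n) ℂ := Rtc * Rc⁻¹ with hV
  have hmapM : (R * (Rᵀ)⁻¹ + Rᵀ * R⁻¹).map Complex.ofReal = U + V := by
    rw [Matrix.map_add]
    · rw [show (R * (Rᵀ)⁻¹).map Complex.ofReal
          = R.map Complex.ofReal * ((Rᵀ)⁻¹).map Complex.ofReal from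
          Matrix.map_mul (f := Complex.ofRealHom)]
      rw [show (Rᵀ * R⁻¹).map Complex.ofReal
          = Rᵀ.map Complex.ofReal * (R⁻¹).map Complex.ofReal from
          Matrix.map_mul (f := Complex.ofRealHom)]
      rw [hmapinv _ hdetT, hmapinv _ hdet]
    · intro x y; simp
  rw [hmapM] at hμ
  rw [spectrum.mem_iff] at hμ
  rw [Algebra.algebraMap_eq_smul_one] at hμ
  -- products of U and V
  have hUV : U * V = 1 := by
    rw [hU, hV]
    rw [Matrix.mul_assoc, ← Matrix.mul_assoc Rtc⁻¹, Matrix.nonsing_inv_mul _ hdetTc,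
      Matrix.one_mul, Matrix.mul_nonsing_inv _ hdetc]
  have hVU : V * U = 1 := by
    rw [hU, hV]
    rw [Matrix.mul_assoc, ← Matrix.mul_assoc Rc⁻¹, Matrix.nonsing_inv_mul _ hdetc,
      Matrix.one_mul, Matrix.mul_nonsing_inv _ hdetTc]
  have hVunit : IsUnit V := ⟨⟨V, U, hVU, hUV⟩, rfl⟩
  -- roots of the quadratic
  obtain ⟨s, hs⟩ := IsAlgClosed.exists_pow_nat_eq (k := ℂ) (μ^2 - 4) (n := 2) (by norm_num)
  set lam : ℂ := (μ + s) / 2 with hlam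
  set lam' : ℂ := (μ - s) / 2 with hlam'
  have hsum : lam + lam' = μ := by rw [hlam, hlam']; ring
  have hprod : lam * lam' = 1 := by
    rw [hlam, hlam']
    field_simp
    linear_combination -hs
  -- factorization
  have hfact : μ • (1 : Matrix (Fin n) (Fin n) ℂ) - (U + V)
      = (-V) * ((U - lam • 1) * (U - lam' • 1)) := by
    have expand : (U - lam • 1) * (U - lam' • 1) = U * U - μ • U + 1 := by
      simp only [sub_mul, mul_sub, smul_mul_assoc, mul_smul_comm, smul_sub, smul_smul,
        Matrix.one_mul, Matrix.mul_one, mul_comm lam' lam, hprod, one_smul]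
      rw [← hsum, add_smul]
      abel
    rw [expand]
    rw [neg_mul]
    rw [mul_add, mul_sub, ← Matrix.mul_assoc, hVU, Matrix.one_mul, Matrix.mul_smul,
      hVU, Matrix.mul_one]
    abel
  rw [hfact] at hμ
  -- one of the factors is not a unit
  have hfac : ¬ IsUnit (U - lam • 1) ∨ ¬ IsUnit (U - lam' • 1) := by
    by_contra h
    push_neg at h
    exact hμ ((hVunit.neg).mul (h.1.mul h.2))
  -- from non-unit factor to eigen-relation
  have heig : ∀ c : ℂ, ¬ IsUnit (U - c • 1) →
      ∃ w : Fin n → ℂ, w ≠ 0 ∧ Rc *ᵥ w = c • (Rtc *ᵥ w) := by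
    intro c hc
    rw [Matrix.isUnit_iff_isUnit_det, isUnit_iff_ne_zero, not_not] at hc
    obtain ⟨v, hv, hv0⟩ := (Matrix.exists_mulVec_eq_zero_iff).2 hc
    refine ⟨Rtc⁻¹ *ᵥ v, ?_, ?_⟩
    · intro h
      apply hv
      have : Rtc *ᵥ (Rtc⁻¹ *ᵥ v) = Rtc *ᵥ 0 := by rw [h]
      rwa [Matrix.mulVec_mulVec, Matrix.mul_nonsing_inv _ hdetTc, Matrix.one_mulVec,
        Matrix.mulVec_zero] at this
    · have h1 : Rtc *ᵥ (Rtc⁻¹ *ᵥ v) = v := by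
        rw [Matrix.mulVec_mulVec, Matrix.mul_nonsing_inv _ hdetTc, Matrix.one_mulVec]
      rw [h1]
      have h2 : (U - c • 1) *ᵥ v = U *ᵥ v - c • v := by
        rw [Matrix.sub_mulVec, Matrix.smul_mulVec, Matrix.one_mulVec]
      rw [h2] at hv0
      have h3 : U *ᵥ v = c • v := by
        have := sub_eq_zero.mp hv0
        exact this
      rw [← h3, hU, ← Matrix.mulVec_mulVec]
  -- modulus one for the realized root
  have hfinal : ∀ c c' : ℂ, c * c' = 1 → c + c' = μ → ‖c‖ = 1 →
      μ.im = 0 ∧ -2 ≤ μ.re ∧ μ.re ≤ 2 := by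
    intro c c' hcc hsum2 habs
    have hc0 : c ≠ 0 := by
      intro h; rw [h, zero_mul] at hcc; exact zero_ne_one hcc
    have hc' : c' = (starRingEnd ℂ) c := by
      have hinv : c' = c⁻¹ := by
        field_simp
        linear_combination hcc
      rw [hinv, Complex.inv_def]
      have : Complex.normSq c = 1 := by
        rw [← Complex.sq_norm, habs]; norm_num
      rw [this]
      simp
    rw [hc'] at hsum2
    rw [Complex.add_conj] at hsum2
    have hre : μ.re = 2 * c.re := by rw [← hsum2]; simp
    have him : μ.im = 0 := by rw [← hsum2]; simp
    refine ⟨him, ?_, ?_⟩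
    · rw [hre]
      have := Complex.abs_re_le_norm c
      rw [habs] at this
      have := abs_le.mp this
      linarith [this.1]
    · rw [hre]
      have := Complex.abs_re_le_norm c
      rw [habs] at this
      have := abs_le.mp this
      linarith [(abs_le.mp (habs ▸ Complex.abs_re_le_norm c)).2]
  rcases hfac with h | h
  · obtain ⟨w, hw, hwe⟩ := heig lam h
    exact hfinal lam lam' hprod hsum (EigAux.mod_one R hR lam w hw hwe)
  · obtain ⟨w, hw, hwe⟩ := heig lam' h
    exact hfinal lam' lam (by rw [mul_comm]; exact hprod) (by rw [add_comm]; exact hsum)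
      (EigAux.mod_one R hR lam' w hw hwe)
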